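/- Under outcome monotonicity, the individual burden induced by a classifier f equals the individual burden induced by the associated outcome threshold classifier: min{c(x,x') : f(x') = 1} = min{c(x,x') : ℓ(x') ≥ τ(f)} where τ(f) = min{ℓ(z) : f(z)=1}; hence the social burden of f equals that of its threshold counterpart. -/

import Mathlib

open MeasureTheory ENNReal

/-- Under outcome monotonicity, the individual burden induced by a classifier
`f` equals the individual burden induced by its associated outcome threshold
classifier: `inf {c(x,x') : f x' = 1} = inf {c(x,x') : ℓ x' ≥ τ(f)}`, where
`τ(f)` is the minimum likelihood over the acceptance set of `f`; hence,
integrating against the distribution `μ` of `X` given `Y = 1`, the social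
burdens agree. -/
theorem stmt_17 {X : Type*} [MeasurableSpace X] (μ : Measure X)
    (ℓ : X → ℝ) (c : X → X → ℝ≥0∞)
    (hrange : ∀ x, ℓ x ∈ Set.Ioc (0:ℝ) 1)
    (h1 : ∀ x x', 0 < c x x' ↔ ℓ x < ℓ x')
    (h2 : ∀ x x' xs, (c x' xs < c x xs ∧ 0 < c x' xs) ↔ (ℓ x < ℓ x' ∧ ℓ x' < ℓ xs))
    (h3 : ∀ x x' xs, (c x x' < c x xs ∧ 0 < c x x') ↔ (ℓ x < ℓ x' ∧ ℓ x' < ℓ xs))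
    (f : X → Bool) (τf : ℝ) (hτf : IsLeast (ℓ '' {z | f z = true}) τf)
    (hattain : ∀ l : ℝ, l ∈ Set.range ℓ → τf ≤ l → ∃ z, f z = true ∧ ℓ z = l) :
    (∀ x : X, (⨅ x' ∈ {z | f z = true}, c x x')
        = ⨅ x' ∈ {z | τf ≤ ℓ z}, c x x') ∧
    ∫⁻ x, (⨅ x' ∈ {z | f z = true}, c x x') ∂μ
        = ∫⁻ x, (⨅ x' ∈ {z | τf ≤ ℓ z}, c x x') ∂μ := by
  have key : ∀ x : X, (⨅ x' ∈ {z | f z = true}, c x x')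
      = ⨅ x' ∈ {z | τf ≤ ℓ z}, c x x' := by
    intro x
    apply le_antisymm
    · refine le_iInf₂ fun x' hx' => ?_
      obtain ⟨z, hfz, hz⟩ := hattain (ℓ x') ⟨x', rfl⟩ hx'
      have hle : c x z ≤ c x x' := by
        by_contra h
        push_neg at h
        rcases eq_or_lt_of_le (zero_le : (0:ℝ≥0∞) ≤ c x x') with h0 | h0
        · have hx'le : ¬ ℓ x < ℓ x' := by
            rw [← h1 x x']; rw [← h0]; exact lt_irrefl 0
          have hzzero : ¬ 0 < c x z := by
            rw [h1, hz]; exact hx'le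
          exact hzzero (lt_of_le_of_lt zero_le h)
        · have := (h3 x x' z).mp ⟨h, h0⟩
          rw [hz] at this
          exact lt_irrefl _ this.2
      exact iInf₂_le_of_le z hfz hle
    · refine le_iInf₂ fun z hz => ?_
      exact iInf₂_le z (hτf.2 ⟨z, hz, rfl⟩)
  exact ⟨key, lintegral_congr fun x => key x⟩
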